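/- arXiv:1312.2731 — 4 statements merged into one kernel-verified Lean document; each statement's English description precedes it below -/
import Mathlib

section
/- Let A = [[d₁, b], [c, d₂]] be a 2×2 nonnegative real matrix with singular values σ₁ ≥ σ₂ ≥ 0 and b·c ≤ d₁·d₂. Then σ₁ + σ₂ ≥ d₁ + d₂ and σ₁ - σ₂ ≥ |d₁ - d₂|. -/
theorem stmt_2 (b c d₁ d₂ σ₁ σ₂ : ℝ)
    (hb : 0 ≤ b) (hc : 0 ≤ c) (hd1 : 0 ≤ d₁) (hd2 : 0 ≤ d₂)
    (hσ : σ₁ ≥ σ₂) (hσ2 : σ₂ ≥ 0)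
    (hbc : b * c ≤ d₁ * d₂)
    (hsum : σ₁ ^ 2 + σ₂ ^ 2 = d₁ ^ 2 + d₂ ^ 2 + b ^ 2 + c ^ 2)
    (hprod : σ₁ * σ₂ = d₁ * d₂ - b * c) :
    σ₁ + σ₂ ≥ d₁ + d₂ ∧ σ₁ - σ₂ ≥ |d₁ - d₂| := by
  constructor
  · nlinarith [sq_nonneg (b - c), sq_nonneg (σ₁ + σ₂ - d₁ - d₂), sq_nonneg (σ₁ + σ₂ + d₁ + d₂)]
  · rcases abs_cases (d₁ - d₂) with ⟨h, _⟩ | ⟨h, _⟩ <;> rw [h] <;>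
      nlinarith [sq_nonneg (b + c), sq_nonneg (σ₁ - σ₂ - d₁ + d₂), sq_nonneg (σ₁ - σ₂ + d₁ - d₂)]
end

section
/- Let A, B be m×n real matrices with singular values ρ₁ ≥ … ≥ ρₙ and σ₁ ≥ … ≥ σₙ respectively. Then trace(Aᵀ B) ≤ Σᵢ ρᵢσᵢ (von Neumann trace inequality). -/
open Matrix

/-- The m×n rectangular diagonal matrix with diagonal entries `σ`. -/
def diagRect {m n : ℕ} (σ : Fin n → ℝ) : Matrix (Fin m) (Fin n) ℝ :=
  Matrix.of fun i j => if (i : ℕ) = (j : ℕ) then σ j else 0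

section VonNeumannAux

open Finset

lemma vn_telesc (f : ℕ → ℝ) (i n : ℕ) (_h : i ≤ n) :
    ∑ k ∈ Ico i n, (f k - f (k+1)) = f i - f n := by
  rw [Finset.sum_Ico_eq_sum_range]
  have : ∀ k, f (i + k) - f (i + k + 1) = (fun j => f (i + j)) k - (fun j => f (i + j)) (k + 1) := by
    intro k; simp [Nat.add_assoc]
  simp only [this]
  rw [Finset.sum_range_sub' (fun k => f (i + k))]
  congr 2
  omega

lemma vn_sum_ite_coe_eq {m : ℕ} (i : ℕ) (g : Fin m → ℝ) :
    (∑ k : Fin m, if (k : ℕ) = i then g k else 0) = if h : i < m then g ⟨i, h⟩ else 0 := by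
  split_ifs with h
  · have : ∀ k : Fin m, ((k : ℕ) = i) = (k = ⟨i, h⟩) := by
      intro k; simp [Fin.ext_iff]
    simp only [this]
    simp
  · apply Finset.sum_eq_zero
    intro k _
    rw [if_neg]
    exact fun hk => h (hk ▸ k.isLt)

lemma vn_sum_range_le_of_support (m n : ℕ) (h : ℕ → ℝ) (h0 : ∀ j, 0 ≤ h j)
    (hz : ∀ j, m ≤ j → h j = 0) : ∑ j ∈ range n, h j ≤ ∑ j ∈ range m, h j := by
  calc ∑ j ∈ range n, h j = ∑ j ∈ range n ∩ range m, h j := by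
        refine (Finset.sum_subset (Finset.inter_subset_left) ?_).symm
        intro x hx hx2
        exact hz x (by simp at hx hx2 ⊢; omega)
    _ ≤ ∑ j ∈ range m, h j :=
        Finset.sum_le_sum_of_subset_of_nonneg (Finset.inter_subset_right)
          (fun j _ _ => h0 j)

lemma vn_sum_range_eq_of_support (m n : ℕ) (h : ℕ → ℝ)
    (hzm : ∀ j, m ≤ j → h j = 0) (hzn : ∀ j, n ≤ j → h j = 0) :
    ∑ j ∈ range m, h j = ∑ j ∈ range n, h j := by
  have h1 : ∑ j ∈ range m, h j = ∑ j ∈ range (max m n), h j :=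
    Finset.sum_subset (by simp) (fun x hx hx2 => hzm x (by simp at hx hx2 ⊢; omega))
  have h2 : ∑ j ∈ range n, h j = ∑ j ∈ range (max m n), h j :=
    Finset.sum_subset (by simp) (fun x hx hx2 => hzn x (by simp at hx hx2 ⊢; omega))
  rw [h1, h2]

lemma vn_key (n : ℕ) (ρ σ : ℕ → ℝ) (D : ℕ → ℕ → ℝ)
    (hρa : ∀ i, ρ (i+1) ≤ ρ i) (hσa : ∀ i, σ (i+1) ≤ σ i)
    (hρn : ρ n = 0) (hσn : σ n = 0)
    (hD0 : ∀ i j, 0 ≤ D i j)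
    (hrow : ∀ i, i < n → ∑ j ∈ range n, D i j ≤ 1)
    (hcol : ∀ j, j < n → ∑ i ∈ range n, D i j ≤ 1) :
    ∑ i ∈ range n, ∑ j ∈ range n, ρ i * σ j * D i j ≤ ∑ i ∈ range n, ρ i * σ i := by
  classical
  set a : ℕ → ℝ := fun k => ρ k - ρ (k+1) with ha
  set b : ℕ → ℝ := fun l => σ l - σ (l+1) with hb
  have ha0 : ∀ k, 0 ≤ a k := fun k => by simp only [ha]; linarith [hρa k]
  have hb0 : ∀ l, 0 ≤ b l := fun l => by simp only [hb]; linarith [hσa l]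
  set c : ℕ → ℕ → ℝ := fun i k => if i ≤ k then (1:ℝ) else 0 with hc
  have hc0 : ∀ i k, 0 ≤ c i k := fun i k => by
    simp only [hc]; split <;> norm_num
  have hc1 : ∀ i k, c i k ≤ 1 := fun i k => by
    simp only [hc]; split <;> norm_num
  -- telescoping representation
  have hrep : ∀ (f : ℕ → ℝ) (g : ℕ → ℝ), (∀ k, g k = f k - f (k+1)) → f n = 0 →
      ∀ i, i < n → f i = ∑ k ∈ range n, c i k * g k := by
    intro f g hg hfn i hi
    have h1 : ∑ k ∈ range n, c i k * g k = ∑ k ∈ (range n).filter (fun k => i ≤ k), g k := by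
      rw [Finset.sum_filter]
      apply Finset.sum_congr rfl
      intro k _
      simp only [hc, ite_mul, one_mul, zero_mul]
    have h2 : (range n).filter (fun k => i ≤ k) = Ico i n := by
      ext x; simp [Finset.mem_filter, Finset.mem_Ico]; omega
    rw [h1, h2]
    simp only [hg]
    rw [vn_telesc f i n (le_of_lt hi), hfn, sub_zero]
  have hρeq : ∀ i, i < n → ρ i = ∑ k ∈ range n, c i k * a k :=
    hrep ρ a (fun k => rfl) hρn
  have hσeq : ∀ j, j < n → σ j = ∑ l ∈ range n, c j l * b l :=
    hrep σ b (fun l => rfl) hσn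
  -- count sums
  have hcount : ∀ k, ∑ i ∈ range n, c i k = ((min (k+1) n : ℕ) : ℝ) := by
    intro k
    have hf : (range n).filter (fun i => i ≤ k) = range (min (k+1) n) := by
      ext x; simp; omega
    calc ∑ i ∈ range n, c i k = ∑ i ∈ (range n).filter (fun i => i ≤ k), (1:ℝ) := by
          rw [Finset.sum_filter]
      _ = ((min (k+1) n : ℕ) : ℝ) := by rw [hf]; simp
  -- N and T
  set N : ℕ → ℕ → ℝ := fun k l => ∑ i ∈ range n, c i k * c i l with hN
  set T : ℕ → ℕ → ℝ := fun k l => ∑ i ∈ range n, ∑ j ∈ range n, c i k * c j l * D i j with hT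
  have hNval : ∀ k l, N k l = ((min (min k l + 1) n : ℕ) : ℝ) := by
    intro k l
    have : ∀ i, c i k * c i l = c i (min k l) := by
      intro i
      simp only [hc]
      by_cases h1 : i ≤ k <;> by_cases h2 : i ≤ l <;>
        simp [h1, h2, Nat.le_min, *]
    simp only [hN, this]
    exact hcount (min k l)
  have hTrow : ∀ k l, T k l ≤ ((min (k+1) n : ℕ) : ℝ) := by
    intro k l
    have hinner : ∀ i, i < n → ∑ j ∈ range n, c j l * D i j ≤ 1 := by
      intro i hi
      calc ∑ j ∈ range n, c j l * D i j ≤ ∑ j ∈ range n, D i j := by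
            apply Finset.sum_le_sum; intro j _
            calc c j l * D i j ≤ 1 * D i j :=
                  mul_le_mul_of_nonneg_right (hc1 j l) (hD0 i j)
              _ = D i j := one_mul _
        _ ≤ 1 := hrow i hi
    calc T k l = ∑ i ∈ range n, c i k * ∑ j ∈ range n, c j l * D i j := by
          simp only [hT]
          apply Finset.sum_congr rfl; intro i _
          rw [Finset.mul_sum]
          apply Finset.sum_congr rfl; intro j _; ring
      _ ≤ ∑ i ∈ range n, c i k * 1 := by
          apply Finset.sum_le_sum; intro i hi
          exact mul_le_mul_of_nonneg_left (hinner i (mem_range.mp hi)) (hc0 i k)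
      _ = ((min (k+1) n : ℕ) : ℝ) := by
          simp only [mul_one]; exact hcount k
  have hTcol : ∀ k l, T k l ≤ ((min (l+1) n : ℕ) : ℝ) := by
    intro k l
    have hinner : ∀ j, j < n → ∑ i ∈ range n, c i k * D i j ≤ 1 := by
      intro j hj
      calc ∑ i ∈ range n, c i k * D i j ≤ ∑ i ∈ range n, D i j := by
            apply Finset.sum_le_sum; intro i _
            calc c i k * D i j ≤ 1 * D i j :=
                  mul_le_mul_of_nonneg_right (hc1 i k) (hD0 i j)
              _ = D i j := one_mul _
        _ ≤ 1 := hcol j hj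
    calc T k l = ∑ j ∈ range n, c j l * ∑ i ∈ range n, c i k * D i j := by
          simp only [hT]
          rw [Finset.sum_comm]
          apply Finset.sum_congr rfl; intro j _
          rw [Finset.mul_sum]
          apply Finset.sum_congr rfl; intro i _; ring
      _ ≤ ∑ j ∈ range n, c j l * 1 := by
          apply Finset.sum_le_sum; intro j hj
          exact mul_le_mul_of_nonneg_left (hinner j (mem_range.mp hj)) (hc0 j l)
      _ = ((min (l+1) n : ℕ) : ℝ) := by
          simp only [mul_one]; exact hcount l
  have hTN : ∀ k l, T k l ≤ N k l := by
    intro k l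
    rw [hNval]
    have hmin : min (min k l + 1) n = min (min (k+1) n) (min (l+1) n) := by omega
    rw [hmin]
    rcases le_total (min (k+1) n) (min (l+1) n) with h | h
    · rw [Nat.min_eq_left h]; exact hTrow k l
    · rw [Nat.min_eq_right h]; exact hTcol k l
  -- expand LHS
  have expand : ∀ i j, i < n → j < n →
      ρ i * σ j * D i j = ∑ k ∈ range n, ∑ l ∈ range n, a k * b l * (c i k * c j l * D i j) := by
    intro i j hi hj
    rw [hρeq i hi, hσeq j hj, Finset.sum_mul_sum, Finset.sum_mul]
    apply Finset.sum_congr rfl; intro k _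
    rw [Finset.sum_mul]
    apply Finset.sum_congr rfl; intro l _
    ring
  have hLHS : ∑ i ∈ range n, ∑ j ∈ range n, ρ i * σ j * D i j
      = ∑ k ∈ range n, ∑ l ∈ range n, a k * b l * T k l := by
    calc ∑ i ∈ range n, ∑ j ∈ range n, ρ i * σ j * D i j
        = ∑ i ∈ range n, ∑ j ∈ range n, ∑ k ∈ range n, ∑ l ∈ range n,
            a k * b l * (c i k * c j l * D i j) := by
          apply Finset.sum_congr rfl; intro i hi
          apply Finset.sum_congr rfl; intro j hj
          exact expand i j (mem_range.mp hi) (mem_range.mp hj)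
      _ = ∑ i ∈ range n, ∑ k ∈ range n, ∑ j ∈ range n, ∑ l ∈ range n,
            a k * b l * (c i k * c j l * D i j) := by
          apply Finset.sum_congr rfl; intro i _
          exact Finset.sum_comm
      _ = ∑ k ∈ range n, ∑ i ∈ range n, ∑ j ∈ range n, ∑ l ∈ range n,
            a k * b l * (c i k * c j l * D i j) := Finset.sum_comm
      _ = ∑ k ∈ range n, ∑ i ∈ range n, ∑ l ∈ range n, ∑ j ∈ range n,
            a k * b l * (c i k * c j l * D i j) := by
          apply Finset.sum_congr rfl; intro k _
          apply Finset.sum_congr rfl; intro i _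
          exact Finset.sum_comm
      _ = ∑ k ∈ range n, ∑ l ∈ range n, ∑ i ∈ range n, ∑ j ∈ range n,
            a k * b l * (c i k * c j l * D i j) := by
          apply Finset.sum_congr rfl; intro k _
          exact Finset.sum_comm
      _ = ∑ k ∈ range n, ∑ l ∈ range n, a k * b l * T k l := by
          apply Finset.sum_congr rfl; intro k _
          apply Finset.sum_congr rfl; intro l _
          simp only [hT, Finset.mul_sum]
  have hRHS : ∑ i ∈ range n, ρ i * σ i
      = ∑ k ∈ range n, ∑ l ∈ range n, a k * b l * N k l := by
    calc ∑ i ∈ range n, ρ i * σ i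
        = ∑ i ∈ range n, ∑ k ∈ range n, ∑ l ∈ range n,
            a k * b l * (c i k * c i l) := by
          apply Finset.sum_congr rfl; intro i hi
          rw [hρeq i (mem_range.mp hi), hσeq i (mem_range.mp hi), Finset.sum_mul_sum]
          apply Finset.sum_congr rfl; intro k _
          apply Finset.sum_congr rfl; intro l _
          ring
      _ = ∑ k ∈ range n, ∑ i ∈ range n, ∑ l ∈ range n,
            a k * b l * (c i k * c i l) := Finset.sum_comm
      _ = ∑ k ∈ range n, ∑ l ∈ range n, ∑ i ∈ range n,
            a k * b l * (c i k * c i l) := by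
          apply Finset.sum_congr rfl; intro k _
          exact Finset.sum_comm
      _ = ∑ k ∈ range n, ∑ l ∈ range n, a k * b l * N k l := by
          apply Finset.sum_congr rfl; intro k _
          apply Finset.sum_congr rfl; intro l _
          simp only [hN, Finset.mul_sum]
  rw [hLHS, hRHS]
  apply Finset.sum_le_sum; intro k _
  apply Finset.sum_le_sum; intro l _
  exact mul_le_mul_of_nonneg_left (hTN k l) (mul_nonneg (ha0 k) (hb0 l))

end VonNeumannAux

/-- von Neumann trace inequality. -/
theorem stmt_7 (m n : ℕ) (A B : Matrix (Fin m) (Fin n) ℝ)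
    (ρ σ : Fin n → ℝ) (hρ : Antitone ρ) (hσ : Antitone σ)
    (hρ0 : ∀ i, 0 ≤ ρ i) (hσ0 : ∀ i, 0 ≤ σ i)
    (U P : Matrix (Fin m) (Fin m) ℝ) (V Q : Matrix (Fin n) (Fin n) ℝ)
    (hU : Uᵀ * U = 1) (hV : Vᵀ * V = 1) (hP : Pᵀ * P = 1) (hQ : Qᵀ * Q = 1)
    (hA : A = U * diagRect (m := m) ρ * Vᵀ) (hB : B = P * diagRect (m := m) σ * Qᵀ) :
    Matrix.trace (Aᵀ * B) ≤ ∑ i, ρ i * σ i := by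
  classical
  set W : Matrix (Fin m) (Fin m) ℝ := Uᵀ * P with hWdef
  set Z : Matrix (Fin n) (Fin n) ℝ := Qᵀ * V with hZdef
  have hUUt : U * Uᵀ = 1 := mul_eq_one_comm.mp hU
  have hPPt : P * Pᵀ = 1 := mul_eq_one_comm.mp hP
  have hQQt : Q * Qᵀ = 1 := mul_eq_one_comm.mp hQ
  have hVVt : V * Vᵀ = 1 := mul_eq_one_comm.mp hV
  have hWWt : W * Wᵀ = 1 := by
    simp only [hWdef, Matrix.transpose_mul, Matrix.transpose_transpose, Matrix.mul_assoc]
    rw [← Matrix.mul_assoc P, hPPt, Matrix.one_mul, hU]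
  have hWtW : Wᵀ * W = 1 := by
    simp only [hWdef, Matrix.transpose_mul, Matrix.transpose_transpose, Matrix.mul_assoc]
    rw [← Matrix.mul_assoc U, hUUt, Matrix.one_mul, hP]
  have hZtZ : Zᵀ * Z = 1 := by
    simp only [hZdef, Matrix.transpose_mul, Matrix.transpose_transpose, Matrix.mul_assoc]
    rw [← Matrix.mul_assoc Q, hQQt, Matrix.one_mul, hV]
  have hZZt : Z * Zᵀ = 1 := by
    simp only [hZdef, Matrix.transpose_mul, Matrix.transpose_transpose, Matrix.mul_assoc]
    rw [← Matrix.mul_assoc V, hVVt, Matrix.one_mul, hQ]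
  have hWr : ∀ k : Fin m, ∑ l, W k l ^ 2 = 1 := by
    intro k
    have h := congrArg (fun M : Matrix (Fin m) (Fin m) ℝ => M k k) hWWt
    simpa [Matrix.mul_apply, Matrix.one_apply_eq, sq] using h
  have hWc : ∀ l : Fin m, ∑ k, W k l ^ 2 = 1 := by
    intro l
    have h := congrArg (fun M : Matrix (Fin m) (Fin m) ℝ => M l l) hWtW
    simpa [Matrix.mul_apply, Matrix.one_apply_eq, sq] using h
  have hZc : ∀ i : Fin n, ∑ j, Z j i ^ 2 = 1 := by
    intro i
    have h := congrArg (fun M : Matrix (Fin n) (Fin n) ℝ => M i i) hZtZ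
    simpa [Matrix.mul_apply, Matrix.one_apply_eq, sq] using h
  have hZr : ∀ j : Fin n, ∑ i, Z j i ^ 2 = 1 := by
    intro j
    have h := congrArg (fun M : Matrix (Fin n) (Fin n) ℝ => M j j) hZZt
    simpa [Matrix.mul_apply, Matrix.one_apply_eq, sq] using h
  -- nat-indexed data
  set ρ' : ℕ → ℝ := fun i => if h : i < n then ρ ⟨i, h⟩ else 0 with hρ'
  set σ' : ℕ → ℝ := fun i => if h : i < n then σ ⟨i, h⟩ else 0 with hσ'
  set w : ℕ → ℕ → ℝ := fun k l => if hk : k < m then if hl : l < m then W ⟨k, hk⟩ ⟨l, hl⟩ else 0 else 0 with hw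
  set z : ℕ → ℕ → ℝ := fun j i => if hj : j < n then if hi : i < n then Z ⟨j, hj⟩ ⟨i, hi⟩ else 0 else 0 with hz
  set D : ℕ → ℕ → ℝ := fun i j => if i < m ∧ j < m then (w i j ^ 2 + z j i ^ 2) / 2 else 0 with hD
  set E : ℕ → ℕ → ℝ := fun i j => if i < m ∧ j < m then w i j * z j i else 0 with hE
  have hρ'0 : ∀ i, 0 ≤ ρ' i := by
    intro i; simp only [hρ']; split
    · apply hρ0
    · exact le_rfl
  have hσ'0 : ∀ i, 0 ≤ σ' i := by
    intro i; simp only [hσ']; split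
    · apply hσ0
    · exact le_rfl
  -- step 1: rewrite the trace
  have h1 : Aᵀ * B = V * ((diagRect ρ : Matrix (Fin m) (Fin n) ℝ)ᵀ *
      (W * ((diagRect σ : Matrix (Fin m) (Fin n) ℝ) * Qᵀ))) := by
    rw [hA, hB, hWdef]
    simp only [Matrix.transpose_mul, Matrix.transpose_transpose, Matrix.mul_assoc]
  have h2 : Matrix.trace (Aᵀ * B) = Matrix.trace ((diagRect ρ : Matrix (Fin m) (Fin n) ℝ)ᵀ *
      (W * ((diagRect σ : Matrix (Fin m) (Fin n) ℝ) * Z))) := by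
    rw [h1, Matrix.trace_mul_comm]
    congr 1
    rw [hZdef]
    simp only [Matrix.mul_assoc]
  -- entrywise computation
  have hDσZ : ∀ (l : Fin m) (i : Fin n),
      ((diagRect σ : Matrix (Fin m) (Fin n) ℝ) * Z) l i
        = if h' : (l : ℕ) < n then σ ⟨(l : ℕ), h'⟩ * Z ⟨(l : ℕ), h'⟩ i else 0 := by
    intro l i
    rw [Matrix.mul_apply]
    have hterm : ∀ j : Fin n, (diagRect σ : Matrix (Fin m) (Fin n) ℝ) l j * Z j i
        = if (j : ℕ) = (l : ℕ) then σ j * Z j i else 0 := by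
      intro j
      simp only [diagRect, Matrix.of_apply, ite_mul, zero_mul]
      congr 1
      simp [eq_comm]
    simp only [hterm]
    exact vn_sum_ite_coe_eq ((l : ℕ)) (fun j => σ j * Z j i)
  have h3 : Matrix.trace ((diagRect ρ : Matrix (Fin m) (Fin n) ℝ)ᵀ *
      (W * ((diagRect σ : Matrix (Fin m) (Fin n) ℝ) * Z)))
      = ∑ i : Fin n, (if h : (i : ℕ) < m then
          ρ i * ∑ l : Fin m, W ⟨(i : ℕ), h⟩ l *
            (if h' : (l : ℕ) < n then σ ⟨(l : ℕ), h'⟩ * Z ⟨(l : ℕ), h'⟩ i else 0)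
          else 0) := by
    rw [Matrix.trace]
    apply Finset.sum_congr rfl
    intro i _
    rw [Matrix.diag]
    rw [Matrix.mul_apply]
    have hterm : ∀ k : Fin m,
        (diagRect ρ : Matrix (Fin m) (Fin n) ℝ)ᵀ i k *
          (W * ((diagRect σ : Matrix (Fin m) (Fin n) ℝ) * Z)) k i
        = if (k : ℕ) = (i : ℕ) then
            ρ i * (W * ((diagRect σ : Matrix (Fin m) (Fin n) ℝ) * Z)) k i else 0 := by
      intro k
      simp only [Matrix.transpose_apply, diagRect, Matrix.of_apply, ite_mul, zero_mul]
    simp only [hterm]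
    rw [vn_sum_ite_coe_eq ((i : ℕ))
      (fun k => ρ i * (W * ((diagRect σ : Matrix (Fin m) (Fin n) ℝ) * Z)) k i)]
    split
    · next h =>
      congr 1
      rw [Matrix.mul_apply]
      apply Finset.sum_congr rfl
      intro l _
      rw [hDσZ l i]
    · rfl
  -- per-index identification with the nat-indexed sums
  have hperi : ∀ i : Fin n,
      (if h : (i : ℕ) < m then
          ρ i * ∑ l : Fin m, W ⟨(i : ℕ), h⟩ l *
            (if h' : (l : ℕ) < n then σ ⟨(l : ℕ), h'⟩ * Z ⟨(l : ℕ), h'⟩ i else 0)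
          else 0)
      = ∑ j ∈ Finset.range n, ρ' (i : ℕ) * σ' j * E (i : ℕ) j := by
    intro i
    by_cases h : (i : ℕ) < m
    · rw [dif_pos h]
      have hconv : ∑ l : Fin m, W ⟨(i : ℕ), h⟩ l *
            (if h' : (l : ℕ) < n then σ ⟨(l : ℕ), h'⟩ * Z ⟨(l : ℕ), h'⟩ i else 0)
          = ∑ l ∈ Finset.range m, w (i : ℕ) l * (σ' l * z l (i : ℕ)) := by
        rw [← Fin.sum_univ_eq_sum_range (fun l => w (i : ℕ) l * (σ' l * z l (i : ℕ))) m]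
        apply Finset.sum_congr rfl
        intro l _
        by_cases h' : (l : ℕ) < n
        · rw [dif_pos h']
          simp only [hw, hσ', hz]
          rw [dif_pos h, dif_pos l.isLt, dif_pos h', dif_pos h', dif_pos i.isLt]
        · rw [dif_neg h']
          simp only [hσ']
          rw [dif_neg h']
          ring
      rw [hconv, Finset.mul_sum]
      have hfun : ∀ j, ρ i * (w (i : ℕ) j * (σ' j * z j (i : ℕ)))
          = ρ' (i : ℕ) * σ' j * E (i : ℕ) j := by
        intro j
        simp only [hw, hσ', hz, hE, hρ', dif_pos i.isLt]
        by_cases hjm : j < m <;> by_cases hjn : j < n <;>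
          simp [h, hjm, hjn] <;> ring
      calc ∑ l ∈ Finset.range m, ρ i * (w (i : ℕ) l * (σ' l * z l (i : ℕ)))
          = ∑ j ∈ Finset.range m, ρ' (i : ℕ) * σ' j * E (i : ℕ) j := by
            apply Finset.sum_congr rfl; intro j _; exact hfun j
        _ = ∑ j ∈ Finset.range n, ρ' (i : ℕ) * σ' j * E (i : ℕ) j := by
            apply vn_sum_range_eq_of_support
            · intro j hj
              have : E (i : ℕ) j = 0 := by
                simp only [hE]; rw [if_neg]; omega
              rw [this, mul_zero]
            · intro j hj
              have : σ' j = 0 := by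
                simp only [hσ']; rw [dif_neg]; omega
              rw [this, mul_zero, zero_mul]
    · rw [dif_neg h]
      symm
      apply Finset.sum_eq_zero
      intro j _
      have : E (i : ℕ) j = 0 := by
        simp only [hE]; rw [if_neg]; omega
      rw [this, mul_zero]
  have htr : Matrix.trace (Aᵀ * B)
      = ∑ i ∈ Finset.range n, ∑ j ∈ Finset.range n, ρ' i * σ' j * E i j := by
    rw [h2, h3]
    rw [← Fin.sum_univ_eq_sum_range (fun i => ∑ j ∈ Finset.range n, ρ' i * σ' j * E i j) n]
    apply Finset.sum_congr rfl
    intro i _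
    exact hperi i
  -- hypotheses for vn_key
  have hρa : ∀ i, ρ' (i+1) ≤ ρ' i := by
    intro i
    simp only [hρ']
    by_cases h1 : i + 1 < n
    · rw [dif_pos h1, dif_pos (by omega : i < n)]
      exact hρ (by simp [Fin.mk_le_mk])
    · rw [dif_neg h1]
      split
      · exact hρ0 _
      · exact le_rfl
  have hσa : ∀ i, σ' (i+1) ≤ σ' i := by
    intro i
    simp only [hσ']
    by_cases h1 : i + 1 < n
    · rw [dif_pos h1, dif_pos (by omega : i < n)]
      exact hσ (by simp [Fin.mk_le_mk])
    · rw [dif_neg h1]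
      split
      · exact hσ0 _
      · exact le_rfl
  have hρn' : ρ' n = 0 := by simp only [hρ']; rw [dif_neg (lt_irrefl n)]
  have hσn' : σ' n = 0 := by simp only [hσ']; rw [dif_neg (lt_irrefl n)]
  have hD0' : ∀ i j, 0 ≤ D i j := by
    intro i j
    simp only [hD]
    split
    · positivity
    · exact le_rfl
  have hrow : ∀ i, i < n → ∑ j ∈ Finset.range n, D i j ≤ 1 := by
    intro i hin
    by_cases him : i < m
    · have hz2 : ∑ j ∈ Finset.range n, z j i ^ 2 = 1 := by
        rw [← Fin.sum_univ_eq_sum_range (fun j => z j i ^ 2) n]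
        have hterm : ∀ j : Fin n, z (j : ℕ) i ^ 2 = Z j ⟨i, hin⟩ ^ 2 := by
          intro j; simp [hz, j.isLt, hin]
        simp only [hterm]
        exact hZc ⟨i, hin⟩
      have hw2 : ∑ j ∈ Finset.range m, (if j < m then w i j ^ 2 else 0) = 1 := by
        rw [← Fin.sum_univ_eq_sum_range (fun j => if j < m then w i j ^ 2 else 0) m]
        have hterm : ∀ j : Fin m, (if (j : ℕ) < m then w i (j : ℕ) ^ 2 else 0)
            = W ⟨i, him⟩ j ^ 2 := by
          intro j; rw [if_pos j.isLt]; simp [hw, him, j.isLt]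
        simp only [hterm]
        exact hWr ⟨i, him⟩
      have hle : ∑ j ∈ Finset.range n, (if j < m then w i j ^ 2 else 0) ≤ 1 := by
        calc ∑ j ∈ Finset.range n, (if j < m then w i j ^ 2 else 0)
            ≤ ∑ j ∈ Finset.range m, (if j < m then w i j ^ 2 else 0) := by
              apply vn_sum_range_le_of_support
              · intro j; split
                · positivity
                · exact le_rfl
              · intro j hj; rw [if_neg (by omega)]
          _ = 1 := hw2
      calc ∑ j ∈ Finset.range n, D i j
          ≤ ∑ j ∈ Finset.range n, ((if j < m then w i j ^ 2 else 0) / 2 + z j i ^ 2 / 2) := by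
            apply Finset.sum_le_sum; intro j _
            simp only [hD]
            by_cases hjm : j < m
            · rw [if_pos (⟨him, hjm⟩ : i < m ∧ j < m), if_pos hjm]
              exact le_of_eq (by ring)
            · rw [if_neg (fun hc => hjm hc.2), if_neg hjm]
              positivity
        _ = (∑ j ∈ Finset.range n, (if j < m then w i j ^ 2 else 0)) / 2
            + (∑ j ∈ Finset.range n, z j i ^ 2) / 2 := by
            rw [Finset.sum_add_distrib, Finset.sum_div, Finset.sum_div]
        _ ≤ 1 := by rw [hz2]; linarith
    · have hzero : ∀ j ∈ Finset.range n, D i j = 0 := by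
        intro j _; simp only [hD]; rw [if_neg (fun hc => him hc.1)]
      rw [Finset.sum_congr rfl hzero]
      simp
  have hcol : ∀ j, j < n → ∑ i ∈ Finset.range n, D i j ≤ 1 := by
    intro j hjn
    by_cases hjm : j < m
    · have hz2 : ∑ i ∈ Finset.range n, z j i ^ 2 = 1 := by
        rw [← Fin.sum_univ_eq_sum_range (fun i => z j i ^ 2) n]
        have hterm : ∀ i : Fin n, z j (i : ℕ) ^ 2 = Z ⟨j, hjn⟩ i ^ 2 := by
          intro i; simp [hz, i.isLt, hjn]
        simp only [hterm]
        exact hZr ⟨j, hjn⟩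
      have hw2 : ∑ i ∈ Finset.range m, (if i < m then w i j ^ 2 else 0) = 1 := by
        rw [← Fin.sum_univ_eq_sum_range (fun i => if i < m then w i j ^ 2 else 0) m]
        have hterm : ∀ i : Fin m, (if (i : ℕ) < m then w (i : ℕ) j ^ 2 else 0)
            = W i ⟨j, hjm⟩ ^ 2 := by
          intro i; rw [if_pos i.isLt]; simp [hw, hjm, i.isLt]
        simp only [hterm]
        exact hWc ⟨j, hjm⟩
      have hle : ∑ i ∈ Finset.range n, (if i < m then w i j ^ 2 else 0) ≤ 1 := by
        calc ∑ i ∈ Finset.range n, (if i < m then w i j ^ 2 else 0)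
            ≤ ∑ i ∈ Finset.range m, (if i < m then w i j ^ 2 else 0) := by
              apply vn_sum_range_le_of_support
              · intro i; split
                · positivity
                · exact le_rfl
              · intro i hi; rw [if_neg (by omega)]
          _ = 1 := hw2
      calc ∑ i ∈ Finset.range n, D i j
          ≤ ∑ i ∈ Finset.range n, ((if i < m then w i j ^ 2 else 0) / 2 + z j i ^ 2 / 2) := by
            apply Finset.sum_le_sum; intro i _
            simp only [hD]
            by_cases him : i < m
            · rw [if_pos (⟨him, hjm⟩ : i < m ∧ j < m), if_pos him]
              exact le_of_eq (by ring)
            · rw [if_neg (fun hc => him hc.1), if_neg him]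
              positivity
        _ = (∑ i ∈ Finset.range n, (if i < m then w i j ^ 2 else 0)) / 2
            + (∑ i ∈ Finset.range n, z j i ^ 2) / 2 := by
            rw [Finset.sum_add_distrib, Finset.sum_div, Finset.sum_div]
        _ ≤ 1 := by rw [hz2]; linarith
    · have hzero : ∀ i ∈ Finset.range n, D i j = 0 := by
        intro i _; simp only [hD]; rw [if_neg (fun hc => hjm hc.2)]
      rw [Finset.sum_congr rfl hzero]
      simp
  have hED : ∀ i j, ρ' i * σ' j * E i j ≤ ρ' i * σ' j * D i j := by
    intro i j
    apply mul_le_mul_of_nonneg_left _ (mul_nonneg (hρ'0 i) (hσ'0 j))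
    simp only [hE, hD]
    split
    · nlinarith [sq_nonneg (w i j - z j i)]
    · exact le_rfl
  rw [htr]
  calc ∑ i ∈ Finset.range n, ∑ j ∈ Finset.range n, ρ' i * σ' j * E i j
      ≤ ∑ i ∈ Finset.range n, ∑ j ∈ Finset.range n, ρ' i * σ' j * D i j :=
        Finset.sum_le_sum (fun i _ => Finset.sum_le_sum (fun j _ => hED i j))
    _ ≤ ∑ i ∈ Finset.range n, ρ' i * σ' i :=
        vn_key n ρ' σ' D hρa hσa hρn' hσn' hD0' hrow hcol
    _ = ∑ i : Fin n, ρ i * σ i := by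
        rw [← Fin.sum_univ_eq_sum_range (fun i => ρ' i * σ' i) n]
        apply Finset.sum_congr rfl
        intro i _
        simp [hρ', hσ', i.isLt]
end

section
/- Let A be an m×n real matrix with singular value decomposition A = U Σ_A Vᵀ, where Σ_A = diag(ρ₁,…,ρₙ) with ρ₁ ≥ … ≥ ρₙ ≥ 0, and let Σ = diag(σ₁,…,σₙ) with prescribed σ₁ ≥ … ≥ σₙ ≥ 0. Then for every m×n matrix X of the form X = P Σ Qᵀ with P, Q orthogonal, ‖U Σ Vᵀ - A‖_F ≤ ‖X - A‖_F. That is, U Σ Vᵀ is a best approximation to A in Frobenius norm from the set of matrices with singular values σ₁,…,σₙ. -/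
open Matrix

/-- The Frobenius norm of a matrix. -/
noncomputable def frob {m n : ℕ} (A : Matrix (Fin m) (Fin n) ℝ) : ℝ :=
  Real.sqrt (∑ i, ∑ j, (A i j) ^ 2)


lemma telesc (f : ℕ → ℝ) (a b : ℕ) (h : a ≤ b) :
    ∑ i ∈ Finset.Ico a b, (f i - f (i+1)) = f a - f b := by
  induction b, h using Nat.le_induction with
  | base => simp
  | succ b hb ih => rw [Finset.sum_Ico_succ_top hb, ih]; ring

lemma count_cast (a b c : ℕ) :
    (∑ j ∈ Finset.range a, if j ≤ b ∧ j < c then (1:ℝ) else 0)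
      = ((min (min (b+1) c) a : ℕ) : ℝ) := by
  rw [← Finset.sum_filter]
  have : (Finset.range a).filter (fun j => j ≤ b ∧ j < c)
      = Finset.range (min (min (b+1) c) a) := by ext i; simp; omega
  simp [this]

lemma row_bound (n m s t : ℕ) (D : ℕ → ℕ → ℝ)
    (hrow : ∀ j, ∑ k ∈ Finset.range n, |D j k| ≤ 1)
    (hsupp : ∀ j k, m ≤ j → D j k = 0) :
    ∑ j ∈ Finset.range n, ∑ k ∈ Finset.range n, (if j ≤ s ∧ k ≤ t then D j k else 0)
      ≤ ((min (min (s+1) m) n : ℕ) : ℝ) := by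
  rw [← count_cast n s m]
  apply Finset.sum_le_sum
  intro j _
  by_cases hjs : j ≤ s
  · by_cases hjm : j < m
    · rw [if_pos (⟨hjs, hjm⟩ : j ≤ s ∧ j < m)]
      calc ∑ k ∈ Finset.range n, (if j ≤ s ∧ k ≤ t then D j k else 0)
          ≤ ∑ k ∈ Finset.range n, |D j k| := by
            apply Finset.sum_le_sum; intro k _
            split
            · exact le_abs_self _
            · exact abs_nonneg _
        _ ≤ 1 := hrow j
    · have hz : ∀ k, D j k = 0 := fun k => hsupp j k (by omega)
      simp [hz, hjm]
  · simp [hjs]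

lemma sum_comm_ite (n s t : ℕ) (D : ℕ → ℕ → ℝ) :
    ∑ j ∈ Finset.range n, ∑ k ∈ Finset.range n, (if j ≤ s ∧ k ≤ t then D j k else 0)
    = ∑ j ∈ Finset.range n, ∑ k ∈ Finset.range n,
        (if j ≤ t ∧ k ≤ s then (fun a b => D b a) j k else 0) := by
  rw [Finset.sum_comm]
  apply Finset.sum_congr rfl; intro k _
  apply Finset.sum_congr rfl; intro j _
  simp [and_comm]

lemma vn_core (n m : ℕ) (ρ σ : ℕ → ℝ)
    (hρ1 : ∀ i, ρ (i+1) ≤ ρ i) (hρn : ρ n = 0)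
    (hσ1 : ∀ i, σ (i+1) ≤ σ i) (hσn : σ n = 0)
    (D : ℕ → ℕ → ℝ)
    (hrow : ∀ j, ∑ k ∈ Finset.range n, |D j k| ≤ 1)
    (hcol : ∀ k, ∑ j ∈ Finset.range n, |D j k| ≤ 1)
    (hsupp : ∀ j k, m ≤ j ∨ m ≤ k → D j k = 0) :
    ∑ j ∈ Finset.range n, ∑ k ∈ Finset.range n, ρ j * σ k * D j k
      ≤ ∑ i ∈ Finset.range (min m n), ρ i * σ i := by
  have hα : ∀ s, 0 ≤ ρ s - ρ (s+1) := fun s => by linarith [hρ1 s]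
  have hβ : ∀ t, 0 ≤ σ t - σ (t+1) := fun t => by linarith [hσ1 t]
  have hrepρ : ∀ j, j < n → ρ j = ∑ s ∈ Finset.range n,
      if j ≤ s then ρ s - ρ (s+1) else 0 := by
    intro j hj
    rw [← Finset.sum_filter]
    have : (Finset.range n).filter (fun s => j ≤ s) = Finset.Ico j n := by
      ext i; simp; omega
    rw [this, telesc ρ j n hj.le, hρn, sub_zero]
  have hrepσ : ∀ k, k < n → σ k = ∑ t ∈ Finset.range n,
      if k ≤ t then σ t - σ (t+1) else 0 := by
    intro k hk
    rw [← Finset.sum_filter]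
    have : (Finset.range n).filter (fun t => k ≤ t) = Finset.Ico k n := by
      ext i; simp; omega
    rw [this, telesc σ k n hk.le, hσn, sub_zero]
  -- expand LHS
  have lhs_eq : ∑ j ∈ Finset.range n, ∑ k ∈ Finset.range n, ρ j * σ k * D j k
      = ∑ s ∈ Finset.range n, ∑ t ∈ Finset.range n,
          (ρ s - ρ (s+1)) * (σ t - σ (t+1)) *
            ∑ j ∈ Finset.range n, ∑ k ∈ Finset.range n,
              (if j ≤ s ∧ k ≤ t then D j k else 0) := by
    have step1 : ∑ j ∈ Finset.range n, ∑ k ∈ Finset.range n, ρ j * σ k * D j k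
        = ∑ j ∈ Finset.range n, ∑ k ∈ Finset.range n, ∑ s ∈ Finset.range n,
            ∑ t ∈ Finset.range n, (ρ s - ρ (s+1)) * (σ t - σ (t+1)) *
              (if j ≤ s ∧ k ≤ t then D j k else 0) := by
      apply Finset.sum_congr rfl; intro j hj
      apply Finset.sum_congr rfl; intro k hk
      rw [Finset.mem_range] at hj hk
      rw [hrepρ j hj, hrepσ k hk, Finset.sum_mul_sum, Finset.sum_mul]
      apply Finset.sum_congr rfl; intro s _
      rw [Finset.sum_mul]
      apply Finset.sum_congr rfl; intro t _
      by_cases h1 : j ≤ s <;> by_cases h2 : k ≤ t <;> simp [h1, h2]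
    rw [step1]
    -- permute the four sums: j k s t ↦ s t j k
    calc ∑ j ∈ Finset.range n, ∑ k ∈ Finset.range n, ∑ s ∈ Finset.range n,
            ∑ t ∈ Finset.range n, (ρ s - ρ (s+1)) * (σ t - σ (t+1)) *
              (if j ≤ s ∧ k ≤ t then D j k else 0)
        = ∑ j ∈ Finset.range n, ∑ s ∈ Finset.range n, ∑ k ∈ Finset.range n,
            ∑ t ∈ Finset.range n, (ρ s - ρ (s+1)) * (σ t - σ (t+1)) *
              (if j ≤ s ∧ k ≤ t then D j k else 0) := by
          exact Finset.sum_congr rfl fun j _ => Finset.sum_comm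
      _ = ∑ s ∈ Finset.range n, ∑ j ∈ Finset.range n, ∑ k ∈ Finset.range n,
            ∑ t ∈ Finset.range n, (ρ s - ρ (s+1)) * (σ t - σ (t+1)) *
              (if j ≤ s ∧ k ≤ t then D j k else 0) := Finset.sum_comm
      _ = ∑ s ∈ Finset.range n, ∑ j ∈ Finset.range n, ∑ t ∈ Finset.range n,
            ∑ k ∈ Finset.range n, (ρ s - ρ (s+1)) * (σ t - σ (t+1)) *
              (if j ≤ s ∧ k ≤ t then D j k else 0) := by
          exact Finset.sum_congr rfl fun s _ =>
            Finset.sum_congr rfl fun j _ => Finset.sum_comm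
      _ = ∑ s ∈ Finset.range n, ∑ t ∈ Finset.range n, ∑ j ∈ Finset.range n,
            ∑ k ∈ Finset.range n, (ρ s - ρ (s+1)) * (σ t - σ (t+1)) *
              (if j ≤ s ∧ k ≤ t then D j k else 0) := by
          exact Finset.sum_congr rfl fun s _ => Finset.sum_comm
      _ = ∑ s ∈ Finset.range n, ∑ t ∈ Finset.range n,
            (ρ s - ρ (s+1)) * (σ t - σ (t+1)) *
              ∑ j ∈ Finset.range n, ∑ k ∈ Finset.range n,
                (if j ≤ s ∧ k ≤ t then D j k else 0) := by
          apply Finset.sum_congr rfl; intro s _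
          apply Finset.sum_congr rfl; intro t _
          rw [Finset.mul_sum]
          apply Finset.sum_congr rfl; intro j _
          rw [Finset.mul_sum]
  -- expand RHS
  have rhs_eq : ∑ i ∈ Finset.range (min m n), ρ i * σ i
      = ∑ s ∈ Finset.range n, ∑ t ∈ Finset.range n,
          (ρ s - ρ (s+1)) * (σ t - σ (t+1)) *
            ∑ i ∈ Finset.range (min m n), (if i ≤ s ∧ i ≤ t then (1:ℝ) else 0) := by
    have step1 : ∑ i ∈ Finset.range (min m n), ρ i * σ i
        = ∑ i ∈ Finset.range (min m n), ∑ s ∈ Finset.range n, ∑ t ∈ Finset.range n,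
            (ρ s - ρ (s+1)) * (σ t - σ (t+1)) *
              (if i ≤ s ∧ i ≤ t then (1:ℝ) else 0) := by
      apply Finset.sum_congr rfl; intro i hi
      rw [Finset.mem_range] at hi
      have hin : i < n := lt_of_lt_of_le hi (min_le_right m n)
      rw [hrepρ i hin, hrepσ i hin, Finset.sum_mul_sum]
      apply Finset.sum_congr rfl; intro s _
      apply Finset.sum_congr rfl; intro t _
      by_cases h1 : i ≤ s <;> by_cases h2 : i ≤ t <;> simp [h1, h2]
    rw [step1, Finset.sum_comm]
    apply Finset.sum_congr rfl; intro s _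
    rw [Finset.sum_comm]
    apply Finset.sum_congr rfl; intro t _
    rw [Finset.mul_sum]
  rw [lhs_eq, rhs_eq]
  apply Finset.sum_le_sum; intro s hs
  apply Finset.sum_le_sum; intro t ht
  rw [Finset.mem_range] at hs ht
  apply mul_le_mul_of_nonneg_left _ (mul_nonneg (hα s) (hβ t))
  -- S s t ≤ N s t
  have hN : ∑ i ∈ Finset.range (min m n), (if i ≤ s ∧ i ≤ t then (1:ℝ) else 0)
      = ((min (min (min s t + 1) m) n : ℕ) : ℝ) := by
    rw [← Finset.sum_filter]
    have : (Finset.range (min m n)).filter (fun i => i ≤ s ∧ i ≤ t)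
        = Finset.range (min (min (min s t + 1) m) n) := by ext i; simp; omega
    simp [this]
  rw [hN]
  rcases le_total s t with h | h
  · calc ∑ j ∈ Finset.range n, ∑ k ∈ Finset.range n,
          (if j ≤ s ∧ k ≤ t then D j k else 0)
        ≤ ((min (min (s+1) m) n : ℕ) : ℝ) :=
          row_bound n m s t D hrow (fun j k hj => hsupp j k (Or.inl hj))
      _ ≤ ((min (min (min s t + 1) m) n : ℕ) : ℝ) := by
          apply Nat.cast_le.mpr; omega
  · calc ∑ j ∈ Finset.range n, ∑ k ∈ Finset.range n,
          (if j ≤ s ∧ k ≤ t then D j k else 0)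
        = ∑ j ∈ Finset.range n, ∑ k ∈ Finset.range n,
            (if j ≤ t ∧ k ≤ s then (fun a b => D b a) j k else 0) :=
          sum_comm_ite n s t D
      _ ≤ ((min (min (t+1) m) n : ℕ) : ℝ) := by
          apply row_bound n m t s (fun a b => D b a)
          · intro j
            simpa using hcol j
          · intro j k hj
            exact hsupp k j (Or.inr hj)
      _ ≤ ((min (min (min s t + 1) m) n : ℕ) : ℝ) := by
          apply Nat.cast_le.mpr; omega

-- inner product of matrices as trace
lemma ip_eq_trace {m n : ℕ} (M N : Matrix (Fin m) (Fin n) ℝ) :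
    (∑ i, ∑ j, M i j * N i j) = Matrix.trace (Mᵀ * N) := by
  rw [Matrix.trace]
  simp only [Matrix.diag, Matrix.mul_apply, Matrix.transpose_apply]
  rw [Finset.sum_comm]

lemma sub_sq_expand {m n : ℕ} (M N : Matrix (Fin m) (Fin n) ℝ) :
    (∑ i, ∑ j, ((M - N) i j) ^ 2)
      = (∑ i, ∑ j, (M i j)^2) + (∑ i, ∑ j, (N i j)^2) - 2 * ∑ i, ∑ j, M i j * N i j := by
  simp only [Matrix.sub_apply, sub_sq]
  rw [Finset.mul_sum]
  rw [← Finset.sum_add_distrib, ← Finset.sum_sub_distrib]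
  apply Finset.sum_congr rfl; intro i _
  rw [Finset.mul_sum, ← Finset.sum_add_distrib, ← Finset.sum_sub_distrib]
  apply Finset.sum_congr rfl; intro j _
  ring

-- diagonal-type sums
lemma diag_sum_m {m n : ℕ} (j : Fin n) (f : Fin m → ℝ) :
    (∑ i : Fin m, (if (i:ℕ) = (j:ℕ) then f i else 0))
      = if h : (j:ℕ) < m then f ⟨j, h⟩ else 0 := by
  split
  · next h =>
    rw [Finset.sum_eq_single (⟨(j:ℕ), h⟩ : Fin m)]
    · simp
    · intro b _ hb
      have : (b:ℕ) ≠ (j:ℕ) := fun hc => hb (by ext; simpa using hc)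
      simp [this]
    · simp
  · next h =>
    apply Finset.sum_eq_zero
    intro i _
    have : (i:ℕ) ≠ (j:ℕ) := by omega
    simp [this]

lemma sum_range_switch (a b : ℕ) (H : ℕ → ℝ) (h : ∀ i, min a b ≤ i → H i = 0) :
    ∑ i ∈ Finset.range a, H i = ∑ i ∈ Finset.range b, H i := by
  have h1 : ∑ i ∈ Finset.range (min a b), H i = ∑ i ∈ Finset.range a, H i :=
    Finset.sum_subset (Finset.range_subset_range.mpr (min_le_left a b))
      (fun x _ hx => h x (by simp at hx; omega))
  have h2 : ∑ i ∈ Finset.range (min a b), H i = ∑ i ∈ Finset.range b, H i :=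
    Finset.sum_subset (Finset.range_subset_range.mpr (min_le_right a b))
      (fun x _ hx => h x (by simp at hx; omega))
  rw [← h1, h2]

-- ‖P N Qᵀ‖² = trace(NᵀN)
lemma normsq_orth {m n : ℕ} (N : Matrix (Fin m) (Fin n) ℝ)
    (P : Matrix (Fin m) (Fin m) ℝ) (Q : Matrix (Fin n) (Fin n) ℝ)
    (hP : Pᵀ * P = 1) (hQ : Qᵀ * Q = 1) :
    (∑ i, ∑ j, ((P * N * Qᵀ) i j)^2) = Matrix.trace (Nᵀ * N) := by
  calc (∑ i, ∑ j, ((P * N * Qᵀ) i j)^2)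
      = ∑ i, ∑ j, (P * N * Qᵀ) i j * (P * N * Qᵀ) i j := by
        apply Finset.sum_congr rfl; intro i _
        apply Finset.sum_congr rfl; intro j _
        ring
    _ = Matrix.trace ((P * N * Qᵀ)ᵀ * (P * N * Qᵀ)) := ip_eq_trace _ _
    _ = Matrix.trace (Q * Nᵀ * N * Qᵀ) := by
        congr 1
        simp only [Matrix.transpose_mul, Matrix.transpose_transpose]
        simp only [← Matrix.mul_assoc]
        rw [Matrix.mul_assoc (Q * Nᵀ) Pᵀ P, hP, Matrix.mul_one]
    _ = Matrix.trace (Nᵀ * N) := by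
        rw [Matrix.trace_mul_comm (Q * Nᵀ * N) Qᵀ]
        simp only [← Matrix.mul_assoc]
        rw [hQ, Matrix.one_mul]

lemma trace_diag_mul {m n : ℕ} (ρ σ : Fin n → ℝ)
    (C : Matrix (Fin m) (Fin m) ℝ) (B : Matrix (Fin n) (Fin n) ℝ) :
    Matrix.trace ((diagRect ρ : Matrix (Fin m) (Fin n) ℝ)ᵀ * C * (diagRect σ : Matrix (Fin m) (Fin n) ℝ) * B)
    = ∑ j : Fin n, ∑ i : Fin m,
        (if h : (j:ℕ) < m then ρ j * C ⟨(j:ℕ), h⟩ i else 0) *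
        (if h : (i:ℕ) < n then σ ⟨(i:ℕ), h⟩ * B ⟨(i:ℕ), h⟩ j else 0) := by
  have assoc : (diagRect ρ : Matrix (Fin m) (Fin n) ℝ)ᵀ * C * (diagRect σ : Matrix (Fin m) (Fin n) ℝ) * B
      = ((diagRect ρ : Matrix (Fin m) (Fin n) ℝ)ᵀ * C) * ((diagRect σ : Matrix (Fin m) (Fin n) ℝ) * B) := by
    simp only [Matrix.mul_assoc]
  rw [assoc, Matrix.trace]
  simp only [Matrix.diag, Matrix.mul_apply]
  apply Finset.sum_congr rfl; intro j _
  apply Finset.sum_congr rfl; intro i _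
  congr 1
  · -- (Mᵀ C) j i
    simp only [Matrix.transpose_apply, diagRect, Matrix.of_apply, ite_mul, zero_mul]
    exact diag_sum_m j _
  · -- (N B) i j
    simp only [diagRect, Matrix.of_apply, ite_mul, zero_mul]
    have := diag_sum_m (m := n) (n := m) i (fun k => σ k * B k j)
    rw [← this]
    apply Finset.sum_congr rfl; intro k _
    by_cases h : (i:ℕ) = (k:ℕ) <;> simp [h, eq_comm]

lemma bridge {m n : ℕ} (ρ σ : Fin n → ℝ)
    (C : Matrix (Fin m) (Fin m) ℝ) (B : Matrix (Fin n) (Fin n) ℝ) :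
    (∑ j : Fin n, ∑ i : Fin m,
        (if h : (j:ℕ) < m then ρ j * C ⟨(j:ℕ), h⟩ i else 0) *
        (if h : (i:ℕ) < n then σ ⟨(i:ℕ), h⟩ * B ⟨(i:ℕ), h⟩ j else 0))
    = ∑ j ∈ Finset.range n, ∑ k ∈ Finset.range n,
        (if h : j < n then ρ ⟨j, h⟩ else 0) * (if h : k < n then σ ⟨k, h⟩ else 0) *
        (if h : j < n ∧ k < n ∧ j < m ∧ k < m
          then C ⟨j, h.2.2.1⟩ ⟨k, h.2.2.2⟩ * B ⟨k, h.2.1⟩ ⟨j, h.1⟩ else 0) := by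
  set T : ℕ → ℕ → ℝ := fun j i =>
    if h : j < n ∧ i < n ∧ j < m ∧ i < m
      then ρ ⟨j, h.1⟩ * C ⟨j, h.2.2.1⟩ ⟨i, h.2.2.2⟩ * (σ ⟨i, h.2.1⟩ * B ⟨i, h.2.1⟩ ⟨j, h.1⟩)
      else 0 with hT
  have step1 : (∑ j : Fin n, ∑ i : Fin m,
        (if h : (j:ℕ) < m then ρ j * C ⟨(j:ℕ), h⟩ i else 0) *
        (if h : (i:ℕ) < n then σ ⟨(i:ℕ), h⟩ * B ⟨(i:ℕ), h⟩ j else 0))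
      = ∑ j : Fin n, ∑ i : Fin m, T (j:ℕ) (i:ℕ) := by
    apply Finset.sum_congr rfl; intro j _
    apply Finset.sum_congr rfl; intro i _
    rw [hT]
    have hj : (j:ℕ) < n := j.isLt
    have hi : (i:ℕ) < m := i.isLt
    by_cases h1 : (j:ℕ) < m <;> by_cases h2 : (i:ℕ) < n <;>
      simp [h1, h2, hj, hi, Fin.eta]
  rw [step1]
  rw [Fin.sum_univ_eq_sum_range (fun j => ∑ i : Fin m, T j (i:ℕ)) n]
  have step2 : ∀ j ∈ Finset.range n,
      (∑ i : Fin m, T j (i:ℕ)) = ∑ k ∈ Finset.range n, T j k := by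
    intro j _
    rw [Fin.sum_univ_eq_sum_range (fun i => T j i) m]
    apply sum_range_switch
    intro i hi
    rw [hT]
    have : ¬ (j < n ∧ i < n ∧ j < m ∧ i < m) := by omega
    simp [this]
  rw [Finset.sum_congr rfl step2]
  apply Finset.sum_congr rfl; intro j hj
  apply Finset.sum_congr rfl; intro k hk
  rw [Finset.mem_range] at hj hk
  rw [hT]
  by_cases h : j < m ∧ k < m
  · have hc : j < n ∧ k < n ∧ j < m ∧ k < m := ⟨hj, hk, h.1, h.2⟩
    simp only [dif_pos hc, dif_pos hj, dif_pos hk]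
    ring
  · have hc : ¬ (j < n ∧ k < n ∧ j < m ∧ k < m) := by tauto
    simp [hc]

lemma cs_bound (s : Finset ℕ) (f g : ℕ → ℝ)
    (hf : ∑ i ∈ s, (f i)^2 ≤ 1) (hg : ∑ i ∈ s, (g i)^2 ≤ 1) :
    ∑ i ∈ s, |f i * g i| ≤ 1 := by
  have habs : ∑ i ∈ s, |f i * g i| = ∑ i ∈ s, |f i| * |g i| :=
    Finset.sum_congr rfl fun i _ => abs_mul _ _
  rw [habs]
  have h := Finset.sum_mul_sq_le_sq_mul_sq s (fun i => |f i|) (fun i => |g i|)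
  simp only [sq_abs] at h
  have h0 : 0 ≤ ∑ i ∈ s, |f i| * |g i| :=
    Finset.sum_nonneg fun i _ => mul_nonneg (abs_nonneg _) (abs_nonneg _)
  have hf0 : 0 ≤ ∑ i ∈ s, (f i)^2 := Finset.sum_nonneg fun i _ => sq_nonneg _
  have hg0 : 0 ≤ ∑ i ∈ s, (g i)^2 := Finset.sum_nonneg fun i _ => sq_nonneg _
  nlinarith [h]

lemma sum_dite_sq_le (a b : ℕ) (F : ℕ → ℝ) (G : Fin b → ℝ)
    (hFG : ∀ i (h : i < b), F i = G ⟨i, h⟩) (hF0 : ∀ i, b ≤ i → F i = 0) :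
    ∑ i ∈ Finset.range a, (F i)^2 ≤ ∑ i : Fin b, (G i)^2 := by
  have hGF : (∑ i : Fin b, (G i)^2) = ∑ i ∈ Finset.range b, (F i)^2 := by
    rw [← Fin.sum_univ_eq_sum_range (fun i => (F i)^2) b]
    apply Finset.sum_congr rfl; intro i _
    rw [hFG (i:ℕ) i.isLt]
  rw [hGF]
  rcases le_total a b with h | h
  · exact Finset.sum_le_sum_of_subset_of_nonneg (Finset.range_subset_range.mpr h)
      (fun i _ _ => sq_nonneg _)
  · have : ∑ i ∈ Finset.range a, (F i)^2 = ∑ i ∈ Finset.range b, (F i)^2 := by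
      apply sum_range_switch
      intro i hi
      rw [hF0 i (by omega)]
      ring
    exact le_of_eq this

lemma row_norm {k : ℕ} (W : Matrix (Fin k) (Fin k) ℝ) (h : W * Wᵀ = 1) (i : Fin k) :
    ∑ l, (W i l)^2 = 1 := by
  have h' := congrFun (congrFun h i) i
  simpa [Matrix.mul_apply, sq, Matrix.one_apply] using h'

lemma col_norm {k : ℕ} (W : Matrix (Fin k) (Fin k) ℝ) (h : Wᵀ * W = 1) (i : Fin k) :
    ∑ l, (W l i)^2 = 1 := by
  have h' := congrFun (congrFun h i) i
  simpa [Matrix.mul_apply, sq, Matrix.one_apply] using h'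

lemma trace_diag_diag {m n : ℕ} (ρ σ : Fin n → ℝ) :
    Matrix.trace ((diagRect σ : Matrix (Fin m) (Fin n) ℝ)ᵀ * (diagRect ρ : Matrix (Fin m) (Fin n) ℝ))
    = ∑ i ∈ Finset.range (min m n),
        (if h : i < n then σ ⟨i, h⟩ else 0) * (if h : i < n then ρ ⟨i, h⟩ else 0) := by
  rw [Matrix.trace]
  simp only [Matrix.diag, Matrix.mul_apply, Matrix.transpose_apply, diagRect, Matrix.of_apply]
  have e1 : ∀ j : Fin n,
      (∑ i : Fin m, (if (i:ℕ) = (j:ℕ) then σ j else 0) * (if (i:ℕ) = (j:ℕ) then ρ j else 0))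
      = if h : (j:ℕ) < m then σ j * ρ j else 0 := by
    intro j
    have : ∀ i : Fin m,
        (if (i:ℕ) = (j:ℕ) then σ j else 0) * (if (i:ℕ) = (j:ℕ) then ρ j else 0)
        = if (i:ℕ) = (j:ℕ) then σ j * ρ j else 0 := by
      intro i; by_cases h : (i:ℕ) = (j:ℕ) <;> simp [h]
    rw [Finset.sum_congr rfl (fun i _ => this i), diag_sum_m j (fun _ => σ j * ρ j)]
  rw [Finset.sum_congr rfl (fun j _ => e1 j)]
  have e2 : ∀ j : Fin n, (if h : (j:ℕ) < m then σ j * ρ j else 0)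
      = (fun j' : ℕ => if h : j' < n ∧ j' < m
          then σ ⟨j', h.1⟩ * ρ ⟨j', h.1⟩ else 0) (j:ℕ) := by
    intro j
    have hj : (j:ℕ) < n := j.isLt
    by_cases h : (j:ℕ) < m <;> simp [h, hj, Fin.eta]
  rw [Finset.sum_congr rfl (fun j _ => e2 j)]
  rw [Fin.sum_univ_eq_sum_range
    (fun j' : ℕ => if h : j' < n ∧ j' < m then σ ⟨j', h.1⟩ * ρ ⟨j', h.1⟩ else 0) n]
  have hvan : ∀ i, min n (min m n) ≤ i →
      (if h : i < n ∧ i < m then σ ⟨i, h.1⟩ * ρ ⟨i, h.1⟩ else 0) = 0 := by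
    intro i hi
    have h' : ¬(i < n ∧ i < m) := by omega
    exact dif_neg h'
  rw [sum_range_switch n (min m n)
    (fun j' : ℕ => if h : j' < n ∧ j' < m then σ ⟨j', h.1⟩ * ρ ⟨j', h.1⟩ else 0) hvan]
  apply Finset.sum_congr rfl; intro i hi
  rw [Finset.mem_range] at hi
  have h1 : i < n ∧ i < m := by omega
  have h2 : i < n := h1.1
  simp [h1, h2]

lemma trace_conj {m n : ℕ} (M N : Matrix (Fin m) (Fin n) ℝ)
    (U : Matrix (Fin m) (Fin m) ℝ) (V : Matrix (Fin n) (Fin n) ℝ)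
    (hU : Uᵀ * U = 1) (hV : Vᵀ * V = 1) :
    Matrix.trace ((U * N * Vᵀ)ᵀ * (U * M * Vᵀ)) = Matrix.trace (Nᵀ * M) := by
  calc Matrix.trace ((U * N * Vᵀ)ᵀ * (U * M * Vᵀ))
      = Matrix.trace (V * (Nᵀ * (Uᵀ * (U * (M * Vᵀ))))) := by
        congr 1
        simp only [Matrix.transpose_mul, Matrix.transpose_transpose, Matrix.mul_assoc]
    _ = Matrix.trace ((Nᵀ * (Uᵀ * (U * (M * Vᵀ)))) * V) := Matrix.trace_mul_comm _ _
    _ = Matrix.trace (Nᵀ * M) := by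
        rw [← Matrix.mul_assoc Uᵀ U, hU, Matrix.one_mul]
        rw [Matrix.mul_assoc Nᵀ (M * Vᵀ) V, Matrix.mul_assoc M Vᵀ V, hV, Matrix.mul_one]

lemma trace_cross {m n : ℕ} (M N : Matrix (Fin m) (Fin n) ℝ)
    (U P : Matrix (Fin m) (Fin m) ℝ) (V Q : Matrix (Fin n) (Fin n) ℝ) :
    Matrix.trace ((P * N * Qᵀ)ᵀ * (U * M * Vᵀ))
      = Matrix.trace (Nᵀ * (Pᵀ * U) * M * (Vᵀ * Q)) := by
  calc Matrix.trace ((P * N * Qᵀ)ᵀ * (U * M * Vᵀ))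
      = Matrix.trace (Q * (Nᵀ * (Pᵀ * (U * (M * Vᵀ))))) := by
        congr 1
        simp only [Matrix.transpose_mul, Matrix.transpose_transpose, Matrix.mul_assoc]
    _ = Matrix.trace ((Nᵀ * (Pᵀ * (U * (M * Vᵀ)))) * Q) := Matrix.trace_mul_comm _ _
    _ = Matrix.trace (Nᵀ * (Pᵀ * U) * M * (Vᵀ * Q)) := by
        congr 1
        simp only [Matrix.mul_assoc]

lemma sum_sq_le (a b : ℕ) (F : ℕ → ℝ) (G : Fin b → ℝ)
    (hFG : ∀ i (h : i < b), F i = G ⟨i, h⟩ ∨ F i = 0) (hF0 : ∀ i, b ≤ i → F i = 0) :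
    ∑ i ∈ Finset.range a, (F i)^2 ≤ ∑ i : Fin b, (G i)^2 := by
  have hstep : ∑ i ∈ Finset.range b, (F i)^2 ≤ ∑ i : Fin b, (G i)^2 := by
    rw [← Fin.sum_univ_eq_sum_range (fun i => (F i)^2) b]
    apply Finset.sum_le_sum
    intro i _
    rcases hFG (i:ℕ) i.isLt with h | h
    · rw [h, Fin.eta]
    · rw [h]; simpa using sq_nonneg (G i)
  rcases le_total a b with h | h
  · calc ∑ i ∈ Finset.range a, (F i)^2
        ≤ ∑ i ∈ Finset.range b, (F i)^2 :=
          Finset.sum_le_sum_of_subset_of_nonneg (Finset.range_subset_range.mpr h)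
            (fun i _ _ => sq_nonneg _)
      _ ≤ _ := hstep
  · calc ∑ i ∈ Finset.range a, (F i)^2
        = ∑ i ∈ Finset.range b, (F i)^2 := by
          apply sum_range_switch
          intro i hi
          rw [hF0 i (by omega)]
          ring
      _ ≤ _ := hstep

lemma orth_prod {k : ℕ} (U P : Matrix (Fin k) (Fin k) ℝ)
    (hU : Uᵀ * U = 1) (hP : Pᵀ * P = 1) :
    (Pᵀ * U)ᵀ * (Pᵀ * U) = 1 := by
  have hPP : P * Pᵀ = 1 := mul_eq_one_comm.mp hP
  rw [Matrix.transpose_mul, Matrix.transpose_transpose]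
  rw [Matrix.mul_assoc Uᵀ P (Pᵀ * U), ← Matrix.mul_assoc P Pᵀ U, hPP, Matrix.one_mul, hU]


theorem stmt_8 (m n : ℕ) (A : Matrix (Fin m) (Fin n) ℝ)
    (ρ σ : Fin n → ℝ) (hρ : Antitone ρ) (hσ : Antitone σ)
    (hρ0 : ∀ i, 0 ≤ ρ i) (hσ0 : ∀ i, 0 ≤ σ i)
    (U : Matrix (Fin m) (Fin m) ℝ) (V : Matrix (Fin n) (Fin n) ℝ)
    (hU : Uᵀ * U = 1) (hV : Vᵀ * V = 1)
    (hA : A = U * (diagRect ρ : Matrix (Fin m) (Fin n) ℝ) * Vᵀ) :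
    ∀ (X : Matrix (Fin m) (Fin n) ℝ)
      (P : Matrix (Fin m) (Fin m) ℝ) (Q : Matrix (Fin n) (Fin n) ℝ),
      Pᵀ * P = 1 → Qᵀ * Q = 1 → X = P * (diagRect σ : Matrix (Fin m) (Fin n) ℝ) * Qᵀ →
      frob (U * (diagRect σ : Matrix (Fin m) (Fin n) ℝ) * Vᵀ - A) ≤ frob (X - A) := by
  intro X P Q hP hQ hX
  -- orthogonality of the mixing matrices
  have hC1 : (Pᵀ * U)ᵀ * (Pᵀ * U) = 1 := orth_prod U P hU hP
  have hC2 : (Pᵀ * U) * (Pᵀ * U)ᵀ = 1 := mul_eq_one_comm.mp hC1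
  have hB1 : (Vᵀ * Q)ᵀ * (Vᵀ * Q) = 1 := orth_prod Q V hQ hV
  have hB2 : (Vᵀ * Q) * (Vᵀ * Q)ᵀ = 1 := mul_eq_one_comm.mp hB1
  -- monotonicity data for the extended sequences
  have hs1 : ∀ i : ℕ, (if h : i+1 < n then σ ⟨i+1, h⟩ else 0)
      ≤ (if h : i < n then σ ⟨i, h⟩ else 0) := by
    intro i
    by_cases h1 : i + 1 < n
    · have h0 : i < n := by omega
      rw [dif_pos h1, dif_pos h0]
      exact hσ (Fin.mk_le_mk.mpr (by omega))
    · rw [dif_neg h1]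
      by_cases h0 : i < n
      · rw [dif_pos h0]; exact hσ0 _
      · rw [dif_neg h0]
  have hr1 : ∀ i : ℕ, (if h : i+1 < n then ρ ⟨i+1, h⟩ else 0)
      ≤ (if h : i < n then ρ ⟨i, h⟩ else 0) := by
    intro i
    by_cases h1 : i + 1 < n
    · have h0 : i < n := by omega
      rw [dif_pos h1, dif_pos h0]
      exact hρ (Fin.mk_le_mk.mpr (by omega))
    · rw [dif_neg h1]
      by_cases h0 : i < n
      · rw [dif_pos h0]; exact hρ0 _
      · rw [dif_neg h0]
  -- the substochastic kernel
  have hDrow : ∀ j : ℕ, ∑ k ∈ Finset.range n,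
      |if h : j < n ∧ k < n ∧ j < m ∧ k < m
        then (Pᵀ * U) ⟨j, h.2.2.1⟩ ⟨k, h.2.2.2⟩ * (Vᵀ * Q) ⟨k, h.2.1⟩ ⟨j, h.1⟩ else 0| ≤ 1 := by
    intro j
    by_cases hj : j < n ∧ j < m
    · have hD : ∀ k, (if h : j < n ∧ k < n ∧ j < m ∧ k < m
          then (Pᵀ * U) ⟨j, h.2.2.1⟩ ⟨k, h.2.2.2⟩ * (Vᵀ * Q) ⟨k, h.2.1⟩ ⟨j, h.1⟩ else 0)
          = (if h : k < n ∧ k < m then (Pᵀ * U) ⟨j, hj.2⟩ ⟨k, h.2⟩ else 0) *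
            (if h : k < n then (Vᵀ * Q) ⟨k, h⟩ ⟨j, hj.1⟩ else 0) := by
        intro k
        by_cases hk : k < n ∧ k < m
        · have hc : j < n ∧ k < n ∧ j < m ∧ k < m := ⟨hj.1, hk.1, hj.2, hk.2⟩
          rw [dif_pos hc, dif_pos hk, dif_pos hk.1]
        · have hc : ¬(j < n ∧ k < n ∧ j < m ∧ k < m) := by tauto
          rw [dif_neg hc, dif_neg hk, zero_mul]
      rw [Finset.sum_congr rfl (fun k _ => by rw [hD k])]
      apply cs_bound
      · refine le_trans (sum_sq_le n m _ (fun l => (Pᵀ * U) ⟨j, hj.2⟩ l) ?_ ?_)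
          (le_of_eq (row_norm (Pᵀ * U) hC2 ⟨j, hj.2⟩))
        · intro i h
          by_cases hi : i < n ∧ i < m
          · left; rw [dif_pos hi]
          · right; rw [dif_neg hi]
        · intro i hi
          have : ¬(i < n ∧ i < m) := by omega
          rw [dif_neg this]
      · refine le_trans (sum_sq_le n n _ (fun l => (Vᵀ * Q) l ⟨j, hj.1⟩) ?_ ?_)
          (le_of_eq (col_norm (Vᵀ * Q) hB1 ⟨j, hj.1⟩))
        · intro i h
          left; rw [dif_pos h]
        · intro i hi
          rw [dif_neg (by omega)]
    · have hz : ∀ k ∈ Finset.range n, |if h : j < n ∧ k < n ∧ j < m ∧ k < m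
          then (Pᵀ * U) ⟨j, h.2.2.1⟩ ⟨k, h.2.2.2⟩ * (Vᵀ * Q) ⟨k, h.2.1⟩ ⟨j, h.1⟩ else 0|
          = 0 := by
        intro k _
        have hc : ¬(j < n ∧ k < n ∧ j < m ∧ k < m) := by tauto
        rw [dif_neg hc, abs_zero]
      rw [Finset.sum_congr rfl hz]
      simp
  have hDcol : ∀ k : ℕ, ∑ j ∈ Finset.range n,
      |if h : j < n ∧ k < n ∧ j < m ∧ k < m
        then (Pᵀ * U) ⟨j, h.2.2.1⟩ ⟨k, h.2.2.2⟩ * (Vᵀ * Q) ⟨k, h.2.1⟩ ⟨j, h.1⟩ else 0| ≤ 1 := by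
    intro k
    by_cases hk : k < n ∧ k < m
    · have hD : ∀ j, (if h : j < n ∧ k < n ∧ j < m ∧ k < m
          then (Pᵀ * U) ⟨j, h.2.2.1⟩ ⟨k, h.2.2.2⟩ * (Vᵀ * Q) ⟨k, h.2.1⟩ ⟨j, h.1⟩ else 0)
          = (if h : j < n ∧ j < m then (Pᵀ * U) ⟨j, h.2⟩ ⟨k, hk.2⟩ else 0) *
            (if h : j < n then (Vᵀ * Q) ⟨k, hk.1⟩ ⟨j, h⟩ else 0) := by
        intro j
        by_cases hj : j < n ∧ j < m
        · have hc : j < n ∧ k < n ∧ j < m ∧ k < m := ⟨hj.1, hk.1, hj.2, hk.2⟩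
          rw [dif_pos hc, dif_pos hj, dif_pos hj.1]
        · have hc : ¬(j < n ∧ k < n ∧ j < m ∧ k < m) := by tauto
          rw [dif_neg hc, dif_neg hj, zero_mul]
      rw [Finset.sum_congr rfl (fun j _ => by rw [hD j])]
      apply cs_bound
      · refine le_trans (sum_sq_le n m _ (fun l => (Pᵀ * U) l ⟨k, hk.2⟩) ?_ ?_)
          (le_of_eq (col_norm (Pᵀ * U) hC1 ⟨k, hk.2⟩))
        · intro i h
          by_cases hi : i < n ∧ i < m
          · left; rw [dif_pos hi]
          · right; rw [dif_neg hi]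
        · intro i hi
          have : ¬(i < n ∧ i < m) := by omega
          rw [dif_neg this]
      · refine le_trans (sum_sq_le n n _ (fun l => (Vᵀ * Q) ⟨k, hk.1⟩ l) ?_ ?_)
          (le_of_eq (row_norm (Vᵀ * Q) hB2 ⟨k, hk.1⟩))
        · intro i h
          left; rw [dif_pos h]
        · intro i hi
          rw [dif_neg (by omega)]
    · have hz : ∀ j ∈ Finset.range n, |if h : j < n ∧ k < n ∧ j < m ∧ k < m
          then (Pᵀ * U) ⟨j, h.2.2.1⟩ ⟨k, h.2.2.2⟩ * (Vᵀ * Q) ⟨k, h.2.1⟩ ⟨j, h.1⟩ else 0|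
          = 0 := by
        intro j _
        have hc : ¬(j < n ∧ k < n ∧ j < m ∧ k < m) := by tauto
        rw [dif_neg hc, abs_zero]
      rw [Finset.sum_congr rfl hz]
      simp
  -- the key inequality between inner products
  have hXA_le : (∑ i, ∑ j, X i j * A i j)
      ≤ ∑ i, ∑ j, (U * (diagRect σ : Matrix (Fin m) (Fin n) ℝ) * Vᵀ) i j * A i j := by
    have e1 : (∑ i, ∑ j, X i j * A i j)
        = Matrix.trace ((diagRect σ : Matrix (Fin m) (Fin n) ℝ)ᵀ * (Pᵀ * U) *
            (diagRect ρ : Matrix (Fin m) (Fin n) ℝ) * (Vᵀ * Q)) := by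
      rw [ip_eq_trace, hX, hA, trace_cross]
    have e2 : (∑ i, ∑ j, (U * (diagRect σ : Matrix (Fin m) (Fin n) ℝ) * Vᵀ) i j * A i j)
        = Matrix.trace ((diagRect σ : Matrix (Fin m) (Fin n) ℝ)ᵀ *
            (diagRect ρ : Matrix (Fin m) (Fin n) ℝ)) := by
      rw [ip_eq_trace, hA, trace_conj _ _ U V hU hV]
    rw [e1, e2, trace_diag_mul σ ρ (Pᵀ * U) (Vᵀ * Q), bridge σ ρ (Pᵀ * U) (Vᵀ * Q),
        trace_diag_diag ρ σ]
    exact vn_core n m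
      (fun j => if h : j < n then σ ⟨j, h⟩ else 0)
      (fun k => if h : k < n then ρ ⟨k, h⟩ else 0)
      hs1 (dif_neg (by omega)) hr1 (dif_neg (by omega))
      (fun j k => if h : j < n ∧ k < n ∧ j < m ∧ k < m
        then (Pᵀ * U) ⟨j, h.2.2.1⟩ ⟨k, h.2.2.2⟩ * (Vᵀ * Q) ⟨k, h.2.1⟩ ⟨j, h.1⟩ else 0)
      hDrow hDcol
      (fun j k hjk => dif_neg (by omega))
  -- finish via Frobenius-norm expansion
  unfold frob
  apply Real.sqrt_le_sqrt
  rw [sub_sq_expand, sub_sq_expand]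
  have hYY := normsq_orth (diagRect σ : Matrix (Fin m) (Fin n) ℝ) U V hU hV
  have hXX : (∑ i, ∑ j, (X i j)^2)
      = Matrix.trace ((diagRect σ : Matrix (Fin m) (Fin n) ℝ)ᵀ * (diagRect σ : Matrix (Fin m) (Fin n) ℝ)) := by
    rw [hX]
    exact normsq_orth (diagRect σ : Matrix (Fin m) (Fin n) ℝ) P Q hP hQ
  linarith
end

section
/- Let A be an m×n real matrix and let M be the set of m×n real matrices with fixed singular values σ₁ ≥ … ≥ σₙ ≥ 0. If X ∈ M minimizes ‖X - A‖_F over M, then AᵀX and XAᵀ are symmetric matrices. -/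
open Matrix

/-- Givens rotation matrix in the (p,q) plane. -/
noncomputable def giv {k : ℕ} (p q : Fin k) (θ : ℝ) : Matrix (Fin k) (Fin k) ℝ :=
  1 + (Real.cos θ - 1) • (single p p 1 + single q q 1)
    + Real.sin θ • (single q p 1 - single p q 1)

lemma transpose_std {k l : ℕ} (a : Fin k) (b : Fin l) (r : ℝ) :
    (single a b r)ᵀ = single b a r := by
  ext i j; simp [single, and_comm]

lemma giv_orth {k : ℕ} {p q : Fin k} (h : p ≠ q) (θ : ℝ) :
    (giv p q θ)ᵀ * giv p q θ = 1 := by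
  set c := Real.cos θ with hc
  set s := Real.sin θ with hs
  obtain ⟨E, hEdef⟩ : ∃ E : Matrix (Fin k) (Fin k) ℝ,
      E = single p p 1 + single q q 1 := ⟨_, rfl⟩
  obtain ⟨F, hFdef⟩ : ∃ F : Matrix (Fin k) (Fin k) ℝ,
      F = single q p 1 - single p q 1 := ⟨_, rfl⟩
  have z1 : single q q (1:ℝ) * single p p 1 = 0 :=
    single_mul_single_of_ne 1 q q p h.symm 1
  have z2 : single p p (1:ℝ) * single q q 1 = 0 :=
    single_mul_single_of_ne 1 p p q h 1
  have z3 : single p p (1:ℝ) * single q p 1 = 0 :=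
    single_mul_single_of_ne 1 p p q h 1
  have z4 : single q q (1:ℝ) * single p q 1 = 0 :=
    single_mul_single_of_ne 1 q q p h.symm 1
  have z5 : single p q (1:ℝ) * single p p 1 = 0 :=
    single_mul_single_of_ne 1 p q p h.symm 1
  have z6 : single q p (1:ℝ) * single q q 1 = 0 :=
    single_mul_single_of_ne 1 q p q h 1
  have z7 : single q p (1:ℝ) * single q p 1 = 0 :=
    single_mul_single_of_ne 1 q p q h 1
  have z8 : single p q (1:ℝ) * single p q 1 = 0 :=
    single_mul_single_of_ne 1 p q p h.symm 1
  have hEE : E * E = E := by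
    rw [hEdef]
    simp [add_mul, mul_add, single_mul_single_same, z1, z2]
  have hEF : E * F = F := by
    rw [hEdef, hFdef]
    simp [add_mul, mul_sub, single_mul_single_same, z3, z4]
  have hFE : F * E = F := by
    rw [hEdef, hFdef]
    simp [sub_mul, mul_add, single_mul_single_same, z5, z6]
    abel
  have hFF : F * F = -E := by
    rw [hEdef, hFdef]
    simp only [sub_mul, mul_sub, single_mul_single_same, z7, z8, one_mul]
    abel
  have hT : (giv p q θ)ᵀ = 1 + (c - 1) • E - s • F := by
    rw [giv, ← hc, ← hs, hEdef, hFdef]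
    simp only [transpose_add, transpose_sub, transpose_smul, transpose_one, transpose_std]
    module
  have hgiv : giv p q θ = 1 + (c - 1) • E + s • F := by
    rw [giv, ← hc, ← hs, hEdef, hFdef]
  rw [hT, hgiv]
  have expand : (1 + (c - 1) • E - s • F) * (1 + (c - 1) • E + s • F)
      = 1 + (2*(c-1) + (c-1)^2 + s^2) • E := by
    simp only [mul_add, add_mul, sub_mul, mul_sub, one_mul, mul_one,
      smul_mul_assoc, mul_smul_comm, hEE, hEF, hFE, hFF, smul_smul, smul_neg]
    module
  rw [expand]
  have hcs : c ^ 2 + s ^ 2 = 1 := by rw [hc, hs]; exact Real.cos_sq_add_sin_sq θ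
  have h1 : 2*(c-1) + (c-1)^2 + s^2 = 0 := by nlinarith [hcs]
  rw [h1]; simp

lemma real_key (c d : ℝ) (h : ∀ θ : ℝ, (Real.cos θ - 1) * c + Real.sin θ * d ≤ 0) :
    d = 0 := by
  by_contra hd
  have habs : ∀ θ : ℝ, |Real.sin θ * d| ≤ (1 - Real.cos θ) * c := by
    intro θ
    have h1 := h θ
    have h2 := h (-θ)
    rw [Real.cos_neg, Real.sin_neg] at h2
    rw [abs_le]; constructor <;> nlinarith
  have hc : 0 < c := by
    have h1 := habs 1
    have hs1 : 0 < Real.sin 1 := Real.sin_pos_of_pos_of_lt_pi one_pos (by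
      have := Real.pi_gt_three; linarith)
    have hc1 : Real.cos 1 < 1 := by
      have hpy := Real.sin_sq_add_cos_sq 1
      nlinarith [Real.neg_one_le_cos 1, mul_pos hs1 hs1]
    have habs1 : 0 < |Real.sin 1 * d| := abs_pos.2 (mul_ne_zero hs1.ne' hd)
    nlinarith
  set θ := min 1 (|d| / (2 * c)) with hθdef
  have hθpos : 0 < θ := lt_min one_pos (by positivity)
  have hθ1 : θ ≤ 1 := min_le_left _ _
  have hsin : θ / 2 ≤ Real.sin θ := by
    have := Real.sin_gt_sub_cube hθpos
    nlinarith [hθpos, hθ1, mul_nonneg hθpos.le hθpos.le, sq_nonneg θ,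
      mul_le_one₀ (a := θ) (b := θ) hθ1 hθpos.le hθ1]
  have hcosb : 1 - Real.cos θ ≤ θ ^ 2 / 2 := by
    have := Real.one_sub_sq_div_two_le_cos (x := θ)
    linarith
  have hkey := habs θ
  have hsd : (θ / 2) * |d| ≤ |Real.sin θ * d| := by
    rw [abs_mul]
    have : 0 ≤ Real.sin θ := le_trans (by positivity) hsin
    rw [abs_of_nonneg this]
    have := abs_nonneg d
    nlinarith
  have hθle : θ ≤ |d| / (2 * c) := min_le_right _ _
  have : (θ / 2) * |d| ≤ (θ ^ 2 / 2) * c := by nlinarith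
  have hdpos : 0 < |d| := abs_pos.2 hd
  have h2θ : θ * (2 * c) ≤ |d| := by
    rw [hθdef]
    calc (min 1 (|d| / (2 * c))) * (2*c) ≤ (|d| / (2 * c)) * (2*c) := by
          apply mul_le_mul_of_nonneg_right (min_le_right _ _) (by positivity)
      _ = |d| := by field_simp
  nlinarith [mul_le_mul_of_nonneg_left h2θ hθpos.le,
    mul_pos (mul_pos hθpos hθpos) hc, mul_pos hθpos hdpos]

lemma trST {k : ℕ} (S : Matrix (Fin k) (Fin k) ℝ) (a b : Fin k) :
    trace (S * single a b 1) = S b a := by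
  classical
  simp only [Matrix.trace, Matrix.diag, Matrix.mul_apply, single, Matrix.of_apply,
    mul_ite, mul_one, mul_zero]
  rw [Finset.sum_comm]
  simp [Finset.sum_ite_eq, ite_and]

lemma trace_mul_giv {k : ℕ} (S : Matrix (Fin k) (Fin k) ℝ) (p q : Fin k) (θ : ℝ) :
    trace (S * giv p q θ) = trace S + (Real.cos θ - 1) * (S p p + S q q)
      + Real.sin θ * (S p q - S q p) := by
  rw [giv]
  rw [mul_add, mul_add, Matrix.mul_smul, Matrix.mul_smul, mul_add, mul_sub, mul_one]
  rw [trace_add, trace_add, trace_smul, trace_smul, trace_add, trace_sub]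
  simp only [trST, smul_eq_mul]

lemma sqsum_eq_trace {m n : ℕ} (B : Matrix (Fin m) (Fin n) ℝ) :
    ∑ i, ∑ j, (B i j) ^ 2 = trace (Bᵀ * B) := by
  simp only [Matrix.trace, Matrix.diag, Matrix.mul_apply, Matrix.transpose_apply, sq]
  rw [Finset.sum_comm]

lemma cross_eq_trace {m n : ℕ} (A B : Matrix (Fin m) (Fin n) ℝ) :
    ∑ i, ∑ j, (A i j) * (B i j) = trace (Aᵀ * B) := by
  simp only [Matrix.trace, Matrix.diag, Matrix.mul_apply, Matrix.transpose_apply]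
  rw [Finset.sum_comm]

lemma trace_BtB {m n : ℕ} (D B : Matrix (Fin m) (Fin n) ℝ)
    (U : Matrix (Fin m) (Fin m) ℝ) (V : Matrix (Fin n) (Fin n) ℝ)
    (hU : Uᵀ * U = 1) (hV : Vᵀ * V = 1) (hB : B = U * D * Vᵀ) :
    trace (Bᵀ * B) = trace (Dᵀ * D) := by
  have key : Bᵀ * B = V * (Dᵀ * (D * Vᵀ)) := by
    rw [hB]
    simp only [transpose_mul, transpose_transpose, Matrix.mul_assoc]
    rw [← Matrix.mul_assoc Uᵀ U, hU, Matrix.one_mul]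
  rw [key, trace_mul_comm, Matrix.mul_assoc, Matrix.mul_assoc, hV, Matrix.mul_one]

theorem stmt_15 (m n : ℕ) (σ : Fin n → ℝ) (hσ : Antitone σ) (hσ0 : ∀ i, 0 ≤ σ i)
    (A X : Matrix (Fin m) (Fin n) ℝ)
    (M : Set (Matrix (Fin m) (Fin n) ℝ))
    (hM : M = {B | ∃ (U : Matrix (Fin m) (Fin m) ℝ) (V : Matrix (Fin n) (Fin n) ℝ),
        Uᵀ * U = 1 ∧ Vᵀ * V = 1 ∧ B = U * diagRect (m := m) σ * Vᵀ})
    (hX : X ∈ M) (hmin : ∀ Y ∈ M, frob (X - A) ≤ frob (Y - A)) :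
    (Aᵀ * X)ᵀ = Aᵀ * X ∧ (X * Aᵀ)ᵀ = X * Aᵀ := by
  subst hM
  obtain ⟨U, V, hU, hV, hXdef⟩ := hX
  -- Step 1: X maximizes trace (Aᵀ * Y) over M.
  have tmax : ∀ Y : Matrix (Fin m) (Fin n) ℝ,
      Y ∈ {B | ∃ (U : Matrix (Fin m) (Fin m) ℝ) (V : Matrix (Fin n) (Fin n) ℝ),
        Uᵀ * U = 1 ∧ Vᵀ * V = 1 ∧ B = U * diagRect (m := m) σ * Vᵀ} →
      trace (Aᵀ * Y) ≤ trace (Aᵀ * X) := by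
    intro Y hY
    have hf := hmin Y hY
    obtain ⟨U', V', hU', hV', hYdef⟩ := hY
    rw [frob, frob] at hf
    have h1 : ∑ i, ∑ j, ((X - A) i j) ^ 2 ≤ ∑ i, ∑ j, ((Y - A) i j) ^ 2 := by
      have hy0 : (0:ℝ) ≤ ∑ i, ∑ j, ((Y - A) i j) ^ 2 := by positivity
      exact (Real.sqrt_le_sqrt_iff hy0).mp hf
    have expand : ∀ B : Matrix (Fin m) (Fin n) ℝ,
        ∑ i, ∑ j, ((B - A) i j) ^ 2
          = trace (Bᵀ * B) - 2 * trace (Aᵀ * B) + ∑ i, ∑ j, (A i j) ^ 2 := by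
      intro B
      rw [← sqsum_eq_trace, ← cross_eq_trace]
      rw [Finset.mul_sum, ← Finset.sum_sub_distrib, ← Finset.sum_add_distrib]
      apply Finset.sum_congr rfl; intro i _
      rw [Finset.mul_sum, ← Finset.sum_sub_distrib, ← Finset.sum_add_distrib]
      apply Finset.sum_congr rfl; intro j _
      simp only [Matrix.sub_apply]
      ring
    have hXY : trace (Xᵀ * X) = trace (Yᵀ * Y) := by
      rw [trace_BtB _ X U V hU hV hXdef, trace_BtB _ Y U' V' hU' hV' hYdef]
    rw [expand X, expand Y, hXY] at h1
    linarith
  constructor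
  · -- Aᵀ * X symmetric, via right rotations
    ext i j
    rw [Matrix.transpose_apply]
    rcases eq_or_ne j i with h | hji
    · rw [h]
    · set S := Aᵀ * X with hS
      have hkey : ∀ θ : ℝ, (Real.cos θ - 1) * (S j j + S i i)
          + Real.sin θ * (S j i - S i j) ≤ 0 := by
        intro θ
        have hmem : X * giv j i θ ∈ {B | ∃ (U : Matrix (Fin m) (Fin m) ℝ)
            (V : Matrix (Fin n) (Fin n) ℝ),
            Uᵀ * U = 1 ∧ Vᵀ * V = 1 ∧ B = U * diagRect (m := m) σ * Vᵀ} := by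
          refine ⟨U, (giv j i θ)ᵀ * V, hU, ?_, ?_⟩
          · have hRRt : giv j i θ * (giv j i θ)ᵀ = 1 :=
              mul_eq_one_comm.mp (giv_orth hji θ)
            rw [transpose_mul, transpose_transpose, Matrix.mul_assoc,
              ← Matrix.mul_assoc (giv j i θ), hRRt, Matrix.one_mul, hV]
          · rw [hXdef, transpose_mul, transpose_transpose, Matrix.mul_assoc,
              Matrix.mul_assoc]
        have := tmax _ hmem
        rw [← Matrix.mul_assoc, ← hS, trace_mul_giv] at this
        linarith
      have := real_key _ _ hkey
      have : S j i = S i j := by linarith [sub_eq_zero.mp this]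
      exact this
  · -- X * Aᵀ symmetric, via left rotations
    ext i j
    rw [Matrix.transpose_apply]
    rcases eq_or_ne j i with h | hji
    · rw [h]
    · set S := X * Aᵀ with hS
      have hkey : ∀ θ : ℝ, (Real.cos θ - 1) * (S j j + S i i)
          + Real.sin θ * (S j i - S i j) ≤ 0 := by
        intro θ
        have hmem : giv j i θ * X ∈ {B | ∃ (U : Matrix (Fin m) (Fin m) ℝ)
            (V : Matrix (Fin n) (Fin n) ℝ),
            Uᵀ * U = 1 ∧ Vᵀ * V = 1 ∧ B = U * diagRect (m := m) σ * Vᵀ} := by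
          refine ⟨giv j i θ * U, V, ?_, hV, ?_⟩
          · rw [transpose_mul, Matrix.mul_assoc,
              ← Matrix.mul_assoc (giv j i θ)ᵀ, giv_orth hji θ, Matrix.one_mul, hU]
          · rw [hXdef, ← Matrix.mul_assoc, ← Matrix.mul_assoc]
        have := tmax _ hmem
        have htr : trace (Aᵀ * (giv j i θ * X)) = trace (S * giv j i θ) := by
          rw [trace_mul_comm, Matrix.mul_assoc, ← hS, trace_mul_comm]
        have htr2 : trace (Aᵀ * X) = trace S := by rw [hS, trace_mul_comm]
        rw [htr, htr2, trace_mul_giv] at this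
        linarith
      have := real_key _ _ hkey
      have : S j i = S i j := by linarith [sub_eq_zero.mp this]
      exact this
end
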